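/- Let n ≥ 2 be an integer, (f_r)_{r=-n+1}^{n} real data and w_r > 0 for each r ∈ {−n+1,…,n}. Then λ₀ ≠ 0, and the unique global minimizer (β₀,β₁,β₂) ∈ ℝ³ of ∑_{r=-n+1}^{n} w_r (f_r − β₀ − β₁r − β₂r²)² satisfies β₀ + (1/4)β₁ + (1/16)β₂ = (α₀/(16λ₀)) ∑_{r=-n+1}^{n} q₁(r) w_r f_r and β₀ + (3/4)β₁ + (9/16)β₂ = (α₀/(16λ₀)) ∑_{r=-n+1}^{n} q₂(r) w_r f_r, where q₁(r) = r²α₀α₂ + 4α₀α₄r − 4α₀α₃r² − α₀α₃r − α₂² − 4α₂²r − 16r²α₂² + α₁α₂r + 4α₂α₃ + 4α₁α₂r² + 16α₂α₃r + 16α₂α₄ − 16α₁α₄r + α₁α₃ − 16α₃² − r²α₁² + 16r²α₁α₃ − 4α₁α₄ and q₂(r) = 9r²α₀α₂ + 12α₀α₄r − 9α₀α₃r − 12α₀α₃r² − 12α₂²r − 9α₂² − 16r²α₂² + 9α₁α₂r + 12α₁α₂r² + 16α₂α₄ + 12α₂α₃ + 16α₂α₃r + 9α₁α₃ − 16α₁α₄r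 − 12α₁α₄ − 9r²α₁² + 16r²α₁α₃ − 16α₃²; these are the two refinement rules (2.34) of the family of 2n-point schemes D_{2n,2}. -/

import Mathlib

/-- The refinement rules (2.34) of the family of 2n-point schemes `D_{2n,2}`:
weighted least squares fitting of a parabola to `(r, f r)`, `r = -n+1,…,n`,
with positive weights. Then `λ₀ ≠ 0` and the unique minimizer `(β₀, β₁, β₂)`
satisfies the two stated evaluation formulas at `1/4` and `3/4`. -/
theorem stmt_10 (n : ℤ) (hn : 2 ≤ n) (f w : ℤ → ℝ)
    (hw : ∀ r ∈ Finset.Icc (-n + 1) n, 0 < w r)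
    (α0 α1 α2 α3 α4 χ0 χ1 χ3 lam0 : ℝ)
    (hα0 : α0 = ∑ r ∈ Finset.Icc (-n + 1) n, w r)
    (hα1 : α1 = ∑ r ∈ Finset.Icc (-n + 1) n, (r : ℝ) * w r)
    (hα2 : α2 = ∑ r ∈ Finset.Icc (-n + 1) n, (r : ℝ) ^ 2 * w r)
    (hα3 : α3 = ∑ r ∈ Finset.Icc (-n + 1) n, (r : ℝ) ^ 3 * w r)
    (hα4 : α4 = ∑ r ∈ Finset.Icc (-n + 1) n, (r : ℝ) ^ 4 * w r)
    (hχ0 : χ0 = α0 * α2 - α1 ^ 2)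
    (hχ1 : χ1 = α0 * α3 - α1 * α2)
    (hχ3 : χ3 = α0 * α4 - α2 ^ 2)
    (hlam0 : lam0 = χ0 * χ3 - χ1 ^ 2)
    (E : ℝ × ℝ × ℝ → ℝ)
    (hE : ∀ p : ℝ × ℝ × ℝ, E p = ∑ r ∈ Finset.Icc (-n + 1) n,
      w r * (f r - p.1 - p.2.1 * (r : ℝ) - p.2.2 * (r : ℝ) ^ 2) ^ 2) :
    lam0 ≠ 0 ∧ (∃! p : ℝ × ℝ × ℝ, ∀ q : ℝ × ℝ × ℝ, E p ≤ E q) ∧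
    ∀ p : ℝ × ℝ × ℝ, (∀ q : ℝ × ℝ × ℝ, E p ≤ E q) →
      p.1 + 1 / 4 * p.2.1 + 1 / 16 * p.2.2 =
        (α0 / (16 * lam0)) * ∑ r ∈ Finset.Icc (-n + 1) n,
          ((r : ℝ) ^ 2 * α0 * α2 + 4 * α0 * α4 * (r : ℝ) - 4 * α0 * α3 * (r : ℝ) ^ 2
            - α0 * α3 * (r : ℝ) - α2 ^ 2 - 4 * α2 ^ 2 * (r : ℝ) - 16 * (r : ℝ) ^ 2 * α2 ^ 2
            + α1 * α2 * (r : ℝ) + 4 * α2 * α3 + 4 * α1 * α2 * (r : ℝ) ^ 2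
            + 16 * α2 * α3 * (r : ℝ) + 16 * α2 * α4 - 16 * α1 * α4 * (r : ℝ) + α1 * α3
            - 16 * α3 ^ 2 - (r : ℝ) ^ 2 * α1 ^ 2 + 16 * (r : ℝ) ^ 2 * α1 * α3
            - 4 * α1 * α4) * w r * f r ∧
      p.1 + 3 / 4 * p.2.1 + 9 / 16 * p.2.2 =
        (α0 / (16 * lam0)) * ∑ r ∈ Finset.Icc (-n + 1) n,
          (9 * (r : ℝ) ^ 2 * α0 * α2 + 12 * α0 * α4 * (r : ℝ) - 9 * α0 * α3 * (r : ℝ)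
            - 12 * α0 * α3 * (r : ℝ) ^ 2 - 12 * α2 ^ 2 * (r : ℝ) - 9 * α2 ^ 2
            - 16 * (r : ℝ) ^ 2 * α2 ^ 2 + 9 * α1 * α2 * (r : ℝ) + 12 * α1 * α2 * (r : ℝ) ^ 2
            + 16 * α2 * α4 + 12 * α2 * α3 + 16 * α2 * α3 * (r : ℝ) + 9 * α1 * α3
            - 16 * α1 * α4 * (r : ℝ) - 12 * α1 * α4 - 9 * (r : ℝ) ^ 2 * α1 ^ 2
            + 16 * (r : ℝ) ^ 2 * α1 * α3 - 16 * α3 ^ 2) * w r * f r := by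
    classical
  set S := Finset.Icc (-n + 1) n with hS
  -- membership of -1, 0, 1
  have hmem : ∀ r : ℤ, -1 ≤ r → r ≤ 1 → r ∈ S := by
    intro r h1 h2; simp only [hS, Finset.mem_Icc]; omega
  have h0S : (0:ℤ) ∈ S := hmem 0 (by norm_num) (by norm_num)
  have h1S : (1:ℤ) ∈ S := hmem 1 (by norm_num) (by norm_num)
  have hneg1S : (-1:ℤ) ∈ S := hmem (-1) (by norm_num) (by norm_num)
  -- positivity of alpha0
  have hα0pos : 0 < α0 := by
    rw [hα0]; exact Finset.sum_pos hw ⟨0, h0S⟩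
  -- generic quadratic moment expansion
  have sumpoly : ∀ c0 c1 c2 : ℝ,
      ∑ r ∈ S, w r * (c0 + c1 * (r:ℝ) + c2 * (r:ℝ) ^ 2) ^ 2 =
        c0 ^ 2 * α0 + 2 * c0 * c1 * α1 + (2 * c0 * c2 + c1 ^ 2) * α2
          + 2 * c1 * c2 * α3 + c2 ^ 2 * α4 := by
    intro c0 c1 c2
    rw [hα0, hα1, hα2, hα3, hα4, Finset.mul_sum, Finset.mul_sum, Finset.mul_sum,
      Finset.mul_sum, Finset.mul_sum, ← Finset.sum_add_distrib, ← Finset.sum_add_distrib,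
      ← Finset.sum_add_distrib, ← Finset.sum_add_distrib]
    exact Finset.sum_congr rfl fun r _ => by ring
  -- positivity of a sum of weighted squares with a nonvanishing witness
  have sumsq_pos : ∀ g : ℤ → ℝ, ∀ r0 ∈ S, g r0 ≠ 0 →
      0 < ∑ r ∈ S, w r * (g r) ^ 2 := by
    intro g r0 hr0 hg
    refine Finset.sum_pos' (fun r hr => mul_nonneg (hw r hr).le (sq_nonneg _)) ?_
    exact ⟨r0, hr0, mul_pos (hw r0 hr0) (by positivity)⟩
  -- χ0 > 0
  have hχ0pos : 0 < χ0 := by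
    have hid : ∑ r ∈ S, w r * (α1 + (-α0) * (r:ℝ) + 0 * (r:ℝ) ^ 2) ^ 2 = α0 * χ0 := by
      rw [sumpoly, hχ0]; ring
    have hpos : 0 < α0 * χ0 := by
      rw [← hid]
      rcases eq_or_ne α1 0 with h | h
      · refine sumsq_pos _ 1 h1S ?_
        push_cast; rw [h]; simpa using ne_of_gt hα0pos
      · refine sumsq_pos _ 0 h0S ?_
        push_cast; simpa using h
    nlinarith
  -- lam0 > 0
  have hlampos : 0 < lam0 := by
    set c0 := α1 * χ1 - α2 * χ0 with hc0
    set c1 := -(α0 * χ1) with hc1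
    set c2 := α0 * χ0 with hc2
    have hc2pos : 0 < c2 := mul_pos hα0pos hχ0pos
    have hid : ∑ r ∈ S, w r * (c0 + c1 * (r:ℝ) + c2 * (r:ℝ) ^ 2) ^ 2
        = α0 * χ0 * lam0 := by
      rw [sumpoly, hc0, hc1, hc2, hlam0, hχ0, hχ1, hχ3]; ring
    have hwit : c0 ≠ 0 ∨ c0 + c1 + c2 ≠ 0 ∨ c0 - c1 + c2 ≠ 0 := by
      by_contra h
      push_neg at h
      obtain ⟨e0, e1, e2⟩ := h
      have : c2 = 0 := by linarith
      linarith
    have hpos : 0 < α0 * χ0 * lam0 := by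
      rw [← hid]
      rcases hwit with h | h | h
      · refine sumsq_pos _ 0 h0S ?_; push_cast; simpa using h
      · refine sumsq_pos _ 1 h1S ?_; push_cast; simpa using h
      · refine sumsq_pos _ (-1) hneg1S ?_
        push_cast
        intro hz; apply h; linarith [hz]
    nlinarith [mul_pos hα0pos hχ0pos]
  have hlamne : lam0 ≠ 0 := ne_of_gt hlampos
  -- moments of the data
  set m0 := ∑ r ∈ S, w r * f r with hm0
  set m1 := ∑ r ∈ S, (r:ℝ) * w r * f r with hm1
  set m2 := ∑ r ∈ S, (r:ℝ) ^ 2 * w r * f r with hm2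
  -- the explicit minimizer
  set β0 := α0 * (m0 * (α2*α4 - α3^2) - α1 * (m1*α4 - α3*m2) + α2 * (m1*α3 - α2*m2)) / lam0 with hβ0
  set β1 := α0 * (α0 * (m1*α4 - α3*m2) - m0 * (α1*α4 - α3*α2) + α2 * (α1*m2 - m1*α2)) / lam0 with hβ1
  set β2 := α0 * (α0 * (α2*m2 - m1*α3) - α1 * (α1*m2 - m1*α2) + m0 * (α1*α3 - α2^2)) / lam0 with hβ2
  have hlamexp : (α0 * α2 - α1 ^ 2) * (α0 * α4 - α2 ^ 2) - (α0 * α3 - α1 * α2) ^ 2 ≠ 0 := by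
    rw [← hχ0, ← hχ1, ← hχ3, ← hlam0]; exact hlamne
  -- normal equations
  have N0 : α0 * β0 + α1 * β1 + α2 * β2 = m0 := by
    rw [hβ0, hβ1, hβ2]; simp only [mul_div_assoc', ← add_div]
    rw [div_eq_iff hlamne, hlam0, hχ0, hχ1, hχ3]; ring
  have N1 : α1 * β0 + α2 * β1 + α3 * β2 = m1 := by
    rw [hβ0, hβ1, hβ2, hlam0, hχ0, hχ1, hχ3]; field_simp; ring
  have N2 : α2 * β0 + α3 * β1 + α4 * β2 = m2 := by
    rw [hβ0, hβ1, hβ2]; simp only [mul_div_assoc', ← add_div]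
    rw [div_eq_iff hlamne, hlam0, hχ0, hχ1, hχ3]; ring
  -- master expansion of E
  set F2 := ∑ r ∈ S, w r * (f r) ^ 2 with hF2
  have master : ∀ u0 u1 u2 : ℝ,
      (∑ r ∈ S, w r * (f r - u0 - u1 * (r:ℝ) - u2 * (r:ℝ) ^ 2) ^ 2) =
        F2 - 2 * (u0 * m0 + u1 * m1 + u2 * m2)
          + (u0 ^ 2 * α0 + 2 * u0 * u1 * α1 + (2 * u0 * u2 + u1 ^ 2) * α2
            + 2 * u1 * u2 * α3 + u2 ^ 2 * α4) := by
    intro u0 u1 u2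
    rw [hF2, hm0, hm1, hm2, hα0, hα1, hα2, hα3, hα4, Finset.mul_sum, Finset.mul_sum,
      Finset.mul_sum, Finset.mul_sum, Finset.mul_sum, Finset.mul_sum, Finset.mul_sum,
      Finset.mul_sum]
    rw [← Finset.sum_add_distrib, ← Finset.sum_add_distrib, ← Finset.sum_add_distrib,
      ← Finset.sum_add_distrib, ← Finset.sum_add_distrib, ← Finset.sum_add_distrib,
      Finset.mul_sum, ← Finset.sum_sub_distrib, ← Finset.sum_add_distrib]
    exact Finset.sum_congr rfl fun r _ => by ring
  -- key decomposition
  have key : ∀ q : ℝ × ℝ × ℝ, E q = E (β0, β1, β2)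
      + ∑ r ∈ S, w r * ((q.1 - β0) + (q.2.1 - β1) * (r:ℝ) + (q.2.2 - β2) * (r:ℝ) ^ 2) ^ 2 := by
    intro q
    have h1 : E q = F2 - 2 * (q.1 * m0 + q.2.1 * m1 + q.2.2 * m2)
        + (q.1 ^ 2 * α0 + 2 * q.1 * q.2.1 * α1 + (2 * q.1 * q.2.2 + q.2.1 ^ 2) * α2
          + 2 * q.2.1 * q.2.2 * α3 + q.2.2 ^ 2 * α4) := by
      rw [hE]; exact master q.1 q.2.1 q.2.2
    have h2 : E (β0, β1, β2) = F2 - 2 * (β0 * m0 + β1 * m1 + β2 * m2)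
        + (β0 ^ 2 * α0 + 2 * β0 * β1 * α1 + (2 * β0 * β2 + β1 ^ 2) * α2
          + 2 * β1 * β2 * α3 + β2 ^ 2 * α4) := by
      rw [hE]; exact master β0 β1 β2
    rw [h1, h2, sumpoly]
    linear_combination (2 * (q.1 - β0)) * N0 + (2 * (q.2.1 - β1)) * N1 + (2 * (q.2.2 - β2)) * N2
  -- the explicit point is a minimizer
  have hmin : ∀ q : ℝ × ℝ × ℝ, E (β0, β1, β2) ≤ E q := by
    intro q
    rw [key q]
    have : 0 ≤ ∑ r ∈ S, w r * ((q.1 - β0) + (q.2.1 - β1) * (r:ℝ) + (q.2.2 - β2) * (r:ℝ) ^ 2) ^ 2 :=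
      Finset.sum_nonneg fun r hr => mul_nonneg (hw r hr).le (sq_nonneg _)
    linarith
  -- any minimizer equals the explicit point
  have huniq : ∀ q : ℝ × ℝ × ℝ, (∀ q' : ℝ × ℝ × ℝ, E q ≤ E q') → q = (β0, β1, β2) := by
    intro q hq
    have heq : E q = E (β0, β1, β2) := le_antisymm (hq _) (hmin q)
    have hQ0 : ∑ r ∈ S, w r * ((q.1 - β0) + (q.2.1 - β1) * (r:ℝ) + (q.2.2 - β2) * (r:ℝ) ^ 2) ^ 2 = 0 := by
      have := key q; linarith
    have hz := (Finset.sum_eq_zero_iff_of_nonneg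
      (fun r hr => mul_nonneg (hw r hr).le (sq_nonneg _))).mp hQ0
    have hval : ∀ r ∈ S, (q.1 - β0) + (q.2.1 - β1) * (r:ℝ) + (q.2.2 - β2) * (r:ℝ) ^ 2 = 0 := by
      intro r hr
      have h := hz r hr
      have hwr := hw r hr
      have : ((q.1 - β0) + (q.2.1 - β1) * (r:ℝ) + (q.2.2 - β2) * (r:ℝ) ^ 2) ^ 2 = 0 := by
        rcases mul_eq_zero.mp h with h' | h'
        · exact absurd h' (ne_of_gt hwr)
        · exact h'
      exact pow_eq_zero_iff (by norm_num) |>.mp this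
    have e0 := hval 0 h0S
    have e1 := hval 1 h1S
    have e2 := hval (-1) hneg1S
    push_cast at e0 e1 e2
    norm_num at e0 e1 e2
    have hq0 : q.1 = β0 := by linarith
    have hq1 : q.2.1 = β1 := by linarith
    have hq2 : q.2.2 = β2 := by linarith
    exact Prod.ext hq0 (Prod.ext hq1 hq2)
  refine ⟨hlamne, ⟨(β0, β1, β2), hmin, fun y hy => huniq y hy⟩, ?_⟩
  intro p hp
  have hpe := huniq p hp
  have hsum1 : ∑ r ∈ S,
      ((r : ℝ) ^ 2 * α0 * α2 + 4 * α0 * α4 * (r : ℝ) - 4 * α0 * α3 * (r : ℝ) ^ 2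
        - α0 * α3 * (r : ℝ) - α2 ^ 2 - 4 * α2 ^ 2 * (r : ℝ) - 16 * (r : ℝ) ^ 2 * α2 ^ 2
        + α1 * α2 * (r : ℝ) + 4 * α2 * α3 + 4 * α1 * α2 * (r : ℝ) ^ 2
        + 16 * α2 * α3 * (r : ℝ) + 16 * α2 * α4 - 16 * α1 * α4 * (r : ℝ) + α1 * α3
        - 16 * α3 ^ 2 - (r : ℝ) ^ 2 * α1 ^ 2 + 16 * (r : ℝ) ^ 2 * α1 * α3
        - 4 * α1 * α4) * w r * f r =
      (- α2^2 + 4*α2*α3 + 16*α2*α4 + α1*α3 - 16*α3^2 - 4*α1*α4) * m0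
        + (4*α0*α4 - α0*α3 - 4*α2^2 + α1*α2 + 16*α2*α3 - 16*α1*α4) * m1
        + (α0*α2 - 4*α0*α3 - 16*α2^2 + 4*α1*α2 - α1^2 + 16*α1*α3) * m2 := by
    rw [hm0, hm1, hm2, Finset.mul_sum, Finset.mul_sum, Finset.mul_sum,
      ← Finset.sum_add_distrib, ← Finset.sum_add_distrib]
    exact Finset.sum_congr rfl fun r _ => by ring
  have hsum2 : ∑ r ∈ S,
      (9 * (r : ℝ) ^ 2 * α0 * α2 + 12 * α0 * α4 * (r : ℝ) - 9 * α0 * α3 * (r : ℝ)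
        - 12 * α0 * α3 * (r : ℝ) ^ 2 - 12 * α2 ^ 2 * (r : ℝ) - 9 * α2 ^ 2
        - 16 * (r : ℝ) ^ 2 * α2 ^ 2 + 9 * α1 * α2 * (r : ℝ) + 12 * α1 * α2 * (r : ℝ) ^ 2
        + 16 * α2 * α4 + 12 * α2 * α3 + 16 * α2 * α3 * (r : ℝ) + 9 * α1 * α3
        - 16 * α1 * α4 * (r : ℝ) - 12 * α1 * α4 - 9 * (r : ℝ) ^ 2 * α1 ^ 2
        + 16 * (r : ℝ) ^ 2 * α1 * α3 - 16 * α3 ^ 2) * w r * f r =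
      (- 9*α2^2 + 12*α2*α3 + 16*α2*α4 + 9*α1*α3 - 16*α3^2 - 12*α1*α4) * m0
        + (12*α0*α4 - 9*α0*α3 - 12*α2^2 + 9*α1*α2 + 16*α2*α3 - 16*α1*α4) * m1
        + (9*α0*α2 - 12*α0*α3 - 16*α2^2 + 12*α1*α2 - 9*α1^2 + 16*α1*α3) * m2 := by
    rw [hm0, hm1, hm2, Finset.mul_sum, Finset.mul_sum, Finset.mul_sum,
      ← Finset.sum_add_distrib, ← Finset.sum_add_distrib]
    exact Finset.sum_congr rfl fun r _ => by ring
  rw [hpe]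
  have h16 : (16:ℝ) * ((α0 * α2 - α1 ^ 2) * (α0 * α4 - α2 ^ 2) - (α0 * α3 - α1 * α2) ^ 2) ≠ 0 :=
    mul_ne_zero (by norm_num) hlamexp
  constructor
  · rw [hsum1]
    simp only
    rw [hlam0, hχ0, hχ1, hχ3, div_mul_eq_mul_div α0, eq_div_iff h16]
    linear_combination
      (α0 * (- α2^2 + 4*α2*α3 + 16*α2*α4 + α1*α3 - 16*α3^2 - 4*α1*α4)) * N0 +
      (α0 * (4*α0*α4 - α0*α3 - 4*α2^2 + α1*α2 + 16*α2*α3 - 16*α1*α4)) * N1 +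
      (α0 * (α0*α2 - 4*α0*α3 - 16*α2^2 + 4*α1*α2 - α1^2 + 16*α1*α3)) * N2
  · rw [hsum2]
    simp only
    rw [hlam0, hχ0, hχ1, hχ3, div_mul_eq_mul_div α0, eq_div_iff h16]
    linear_combination
      (α0 * (- 9*α2^2 + 12*α2*α3 + 16*α2*α4 + 9*α1*α3 - 16*α3^2 - 12*α1*α4)) * N0 +
      (α0 * (12*α0*α4 - 9*α0*α3 - 12*α2^2 + 9*α1*α2 + 16*α2*α3 - 16*α1*α4)) * N1 +
      (α0 * (9*α0*α2 - 12*α0*α3 - 16*α2^2 + 12*α1*α2 - 9*α1^2 + 16*α1*α3)) * N2
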